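/- arXiv:math/0202160 — 2 statements merged into one kernel-verified Lean document; each statement's English description precedes it below -/
import Mathlib

section
/- In the product H² × ℝ with the product Riemannian metric, consider points o, o₀ with o₀ ∈ H² × {0} and o ∈ H² × {0}, and let σ be a geodesic line through o₀ contained in the vertical plane w₀ × ℝ (where w₀ is a geodesic of H² through o₀ perpendicular to the segment o o₀). Let t ∈ w₀ × {0} and s ∈ σ be points with |o₀ - t| = |o₀ - s| = d. Then dist_{H²×ℝ}(o, s) ≤ dist_{H²}(o, t), with equality if and only if d = 0 or σ = w₀ × {0}. -/
/-- The inverse of `cosh` on `[1, ∞)`. -/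
noncomputable def arcosh (x : ℝ) : ℝ := Real.log (x + Real.sqrt (x ^ 2 - 1))

lemma arcosh_eq_arsinh {x : ℝ} (hx : 1 ≤ x) :
    arcosh x = Real.arsinh (Real.sqrt (x ^ 2 - 1)) := by
  unfold arcosh Real.arsinh
  rw [Real.sq_sqrt (by nlinarith), show 1 + (x ^ 2 - 1) = x ^ 2 by ring,
    Real.sqrt_sq (by linarith), add_comm]

lemma cosh_arcosh {x : ℝ} (hx : 1 ≤ x) : Real.cosh (arcosh x) = x := by
  rw [arcosh_eq_arsinh hx, Real.cosh_arsinh, Real.sq_sqrt (by nlinarith),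
    show 1 + (x ^ 2 - 1) = x ^ 2 by ring, Real.sqrt_sq (by linarith)]

lemma sinh_arcosh {x : ℝ} (hx : 1 ≤ x) :
    Real.sinh (arcosh x) = Real.sqrt (x ^ 2 - 1) := by
  rw [arcosh_eq_arsinh hx, Real.sinh_arsinh]

lemma arcosh_nonneg {x : ℝ} (hx : 1 ≤ x) : 0 ≤ arcosh x := by
  rw [arcosh_eq_arsinh hx]
  exact Real.arsinh_nonneg_iff.2 (Real.sqrt_nonneg _)

lemma sinh_lt_mul_cosh {b : ℝ} (hb : 0 < b) : Real.sinh b < b * Real.cosh b := by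
  have h : StrictMonoOn (fun x => x * Real.cosh x - Real.sinh x) (Set.Ici 0) := by
    apply strictMonoOn_of_deriv_pos (convex_Ici 0)
    · fun_prop
    · intro x hx
      rw [interior_Ici, Set.mem_Ioi] at hx
      have hdx : HasDerivAt (fun x => x * Real.cosh x - Real.sinh x) (x * Real.sinh x) x := by
        have h1 := (hasDerivAt_id x).mul (Real.hasDerivAt_cosh x)
        have h2 := Real.hasDerivAt_sinh x
        refine (h1.sub h2).congr_deriv ?_
        simp only [id, one_mul]; ring
      rw [hdx.deriv]
      exact mul_pos hx (Real.sinh_pos_iff.2 hx)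
  have := h (Set.self_mem_Ici) (Set.mem_Ici.2 hb.le) hb
  simpa using this

lemma sinh_div_lt {a b : ℝ} (hb : 0 < b) (hba : b < a) :
    a * Real.sinh b < b * Real.sinh a := by
  have hsum : Real.sinh a - Real.sinh b
      = 2 * Real.cosh ((a + b) / 2) * Real.sinh ((a - b) / 2) := by
    have := Real.sinh_add ((a + b) / 2) ((a - b) / 2)
    have h2 := Real.sinh_sub ((a + b) / 2) ((a - b) / 2)
    have e1 : (a + b) / 2 + (a - b) / 2 = a := by ring
    have e2 : (a + b) / 2 - (a - b) / 2 = b := by ring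
    rw [e1] at this; rw [e2] at h2
    rw [this, h2]; ring
  have hs1 : (a - b) / 2 ≤ Real.sinh ((a - b) / 2) :=
    (Real.self_lt_sinh_iff.2 (by linarith)).le
  have hc1 : Real.cosh b ≤ Real.cosh ((a + b) / 2) := by
    rw [Real.cosh_le_cosh]
    rw [abs_of_nonneg hb.le, abs_of_nonneg (by linarith)]
    linarith
  have key : (a - b) * Real.cosh b ≤ Real.sinh a - Real.sinh b := by
    rw [hsum]
    have h1 : (a - b) * Real.cosh b ≤ (a - b) * Real.cosh ((a + b) / 2) := by
      apply mul_le_mul_of_nonneg_left hc1 (by linarith)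
    calc (a - b) * Real.cosh b ≤ (a - b) * Real.cosh ((a + b) / 2) := h1
      _ ≤ 2 * Real.cosh ((a + b) / 2) * Real.sinh ((a - b) / 2) := by
          have hcp : 0 < Real.cosh ((a + b) / 2) := Real.cosh_pos _
          nlinarith [hs1]
  have hbc := sinh_lt_mul_cosh hb
  nlinarith [key, hbc]

lemma key_ineq {x u : ℝ} (hx : 0 < x) (hxu : x < u) :
    x * Real.sinh u * Real.cosh x < u * Real.sinh x * Real.cosh u := by
  have hE1 : Real.sinh x * Real.cosh u = (Real.sinh (u + x) - Real.sinh (u - x)) / 2 := by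
    rw [Real.sinh_add, Real.sinh_sub]; ring
  have hE2 : Real.sinh u * Real.cosh x = (Real.sinh (u + x) + Real.sinh (u - x)) / 2 := by
    rw [Real.sinh_add, Real.sinh_sub]; ring
  have h := sinh_div_lt (show 0 < u - x by linarith) (show u - x < u + x by linarith)
  nlinarith [h, hE1, hE2]

lemma hasDerivAt_arcosh_cosh {A : ℝ} (hA : 1 < A) (x : ℝ) :
    HasDerivAt (fun x => arcosh (A * Real.cosh x))
      (A * Real.sinh x / Real.sqrt ((A * Real.cosh x) ^ 2 - 1)) x := by
  have hcA : ∀ y : ℝ, 1 < A * Real.cosh y := fun y =>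
    lt_of_lt_of_le hA (le_mul_of_one_le_right (by linarith) (Real.one_le_cosh y))
  have hqpos : ∀ y : ℝ, 0 < (A * Real.cosh y) ^ 2 - 1 := fun y => by nlinarith [hcA y]
  have heq : (fun x => arcosh (A * Real.cosh x))
      = fun x => Real.arsinh (Real.sqrt ((A * Real.cosh x) ^ 2 - 1)) :=
    funext fun y => arcosh_eq_arsinh (hcA y).le
  rw [heq]
  have hq : HasDerivAt (fun x => (A * Real.cosh x) ^ 2 - 1)
      (2 * (A * Real.cosh x) ^ 1 * (A * Real.sinh x)) x :=
    (((Real.hasDerivAt_cosh x).const_mul A).pow 2).sub_const 1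
  have hsq := hq.sqrt (ne_of_gt (hqpos x))
  have har := (Real.hasDerivAt_arsinh (Real.sqrt ((A * Real.cosh x) ^ 2 - 1))).comp x hsq
  refine har.congr_deriv ?_
  have hS : 0 < Real.sqrt ((A * Real.cosh x) ^ 2 - 1) := Real.sqrt_pos.2 (hqpos x)
  have h1 : 1 + Real.sqrt ((A * Real.cosh x) ^ 2 - 1) ^ 2 = (A * Real.cosh x) ^ 2 := by
    rw [Real.sq_sqrt (hqpos x).le]; ring
  have hAc : 0 < A * Real.cosh x := by linarith [hcA x]
  rw [h1, Real.sqrt_sq hAc.le]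
  field_simp

lemma H_strictMono {A : ℝ} (hA : 1 < A) :
    StrictMonoOn (fun x => (arcosh (A * Real.cosh x)) ^ 2 - x ^ 2) (Set.Ici 0) := by
  have hcA : ∀ y : ℝ, 1 < A * Real.cosh y := fun y =>
    lt_of_lt_of_le hA (le_mul_of_one_le_right (by linarith) (Real.one_le_cosh y))
  have hqpos : ∀ y : ℝ, 0 < (A * Real.cosh y) ^ 2 - 1 := fun y => by nlinarith [hcA y]
  apply strictMonoOn_of_deriv_pos (convex_Ici 0)
  · have hdiff : Differentiable ℝ (fun x => arcosh (A * Real.cosh x)) :=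
      fun x => (hasDerivAt_arcosh_cosh hA x).differentiableAt
    exact ((hdiff.continuous.pow 2).sub (continuous_pow 2)).continuousOn
  · intro x hx
    rw [interior_Ici, Set.mem_Ioi] at hx
    have hF := hasDerivAt_arcosh_cosh hA x
    have hH : HasDerivAt (fun x => (arcosh (A * Real.cosh x)) ^ 2 - x ^ 2)
        (2 * arcosh (A * Real.cosh x) ^ 1
          * (A * Real.sinh x / Real.sqrt ((A * Real.cosh x) ^ 2 - 1))
          - (2 : ℕ) * x ^ 1) x := (hF.pow 2).sub (hasDerivAt_pow 2 x)
    rw [hH.deriv]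
    set u := arcosh (A * Real.cosh x) with hu
    set S := Real.sqrt ((A * Real.cosh x) ^ 2 - 1) with hSS
    have hcu : Real.cosh u = A * Real.cosh x := cosh_arcosh (hcA x).le
    have hsu : Real.sinh u = S := by
      rw [hu, sinh_arcosh (hcA x).le]
    have hu0 : 0 ≤ u := arcosh_nonneg (hcA x).le
    have hS0 : 0 < S := Real.sqrt_pos.2 (hqpos x)
    have hxu : x < u := by
      have hcc : Real.cosh x < Real.cosh u := by
        rw [hcu]
        nlinarith [Real.cosh_pos x]
      have := Real.cosh_lt_cosh.1 hcc
      rwa [abs_of_pos hx, abs_of_nonneg hu0] at this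
    have key := key_ineq hx hxu
    have hcx : 0 < Real.cosh x := Real.cosh_pos x
    rw [hsu, hcu] at key
    have h2 : x * S < u * (A * Real.sinh x) := by nlinarith [key, hcx]
    have h3 : x < u * (A * Real.sinh x) / S := (lt_div_iff₀ hS0).2 h2
    rw [mul_div_assoc] at h3
    simp only [pow_one]
    push_cast
    linarith

/-!
STATEMENT 1: In `H² × ℝ`, with `o, o₀ ∈ H² × {0}`, `l = |o - o₀| > 0`, `w₀` the geodesic of
`H²` through `o₀` perpendicular to `o o₀`, and `σ` a geodesic line through `o₀` in the
vertical plane `w₀ × ℝ` making angle `α ∈ [0, π/2]` with `w₀ × {0}`; `t ∈ w₀ × {0}` and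
`s ∈ σ` at distance `d` from `o₀`.  Then `dist_{H²×ℝ}(o, s) ≤ dist_{H²}(o, t)`, with
equality iff `d = 0` or `σ = w₀ × {0}` (i.e. `α = 0`).  In coordinates:
`dist_{H²}(o, t) = arcosh(cosh l · cosh d)` (right triangle in `H²`) and
`dist_{H²×ℝ}(o, s) = sqrt(arcosh(cosh l · cosh(d cos α))² + (d sin α)²)`
(horizontal component of `s` at distance `d cos α` along `w₀`, vertical component `d sin α`).
-/
theorem product_vs_hyperbolic_hypotenuse (l d α : ℝ) (hl : 0 < l) (hd : 0 ≤ d)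
    (hα0 : 0 ≤ α) (hα : α ≤ Real.pi / 2) :
    Real.sqrt ((arcosh (Real.cosh l * Real.cosh (d * Real.cos α))) ^ 2
        + (d * Real.sin α) ^ 2) ≤ arcosh (Real.cosh l * Real.cosh d) ∧
    (Real.sqrt ((arcosh (Real.cosh l * Real.cosh (d * Real.cos α))) ^ 2
        + (d * Real.sin α) ^ 2) = arcosh (Real.cosh l * Real.cosh d) ↔ d = 0 ∨ α = 0) := by
  set A := Real.cosh l with hAdef
  have hA : 1 < A := Real.one_lt_cosh.2 (ne_of_gt hl)
  have hcA : ∀ y : ℝ, 1 ≤ A * Real.cosh y := fun y =>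
    (lt_of_lt_of_le hA (le_mul_of_one_le_right (by linarith) (Real.one_le_cosh y))).le
  have hcos0 : 0 ≤ Real.cos α :=
    Real.cos_nonneg_of_mem_Icc ⟨by linarith [Real.pi_pos], hα⟩
  have hcos1 : Real.cos α ≤ 1 := Real.cos_le_one α
  have hsin0 : 0 ≤ Real.sin α :=
    Real.sin_nonneg_of_nonneg_of_le_pi hα0 (by linarith [Real.pi_pos])
  set y := d * Real.cos α with hy
  have hy0 : 0 ≤ y := mul_nonneg hd hcos0
  have hyd : y ≤ d := by
    calc y = d * Real.cos α := rfl
    _ ≤ d * 1 := mul_le_mul_of_nonneg_left hcos1 hd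
    _ = d := mul_one d
  have hvert : (d * Real.sin α) ^ 2 = d ^ 2 - y ^ 2 := by
    have := Real.sin_sq_add_cos_sq α
    rw [hy]; nlinarith
  have hmono := H_strictMono hA
  have hineq : (arcosh (A * Real.cosh y)) ^ 2 + (d * Real.sin α) ^ 2
      ≤ (arcosh (A * Real.cosh d)) ^ 2 := by
    have := hmono.monotoneOn (Set.mem_Ici.2 hy0) (Set.mem_Ici.2 hd) hyd
    rw [hvert]; linarith
  have hX0 : 0 ≤ (arcosh (A * Real.cosh y)) ^ 2 + (d * Real.sin α) ^ 2 := by positivity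
  have hFd0 : 0 ≤ arcosh (A * Real.cosh d) := arcosh_nonneg (hcA d)
  have hle : Real.sqrt ((arcosh (A * Real.cosh y)) ^ 2 + (d * Real.sin α) ^ 2)
      ≤ arcosh (A * Real.cosh d) := by
    calc Real.sqrt ((arcosh (A * Real.cosh y)) ^ 2 + (d * Real.sin α) ^ 2)
        ≤ Real.sqrt ((arcosh (A * Real.cosh d)) ^ 2) := Real.sqrt_le_sqrt hineq
      _ = arcosh (A * Real.cosh d) := Real.sqrt_sq hFd0
  refine ⟨hle, ?_, ?_⟩
  · intro heq
    by_contra hcon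
    push_neg at hcon
    obtain ⟨hd0, hα0'⟩ := hcon
    have hdpos : 0 < d := lt_of_le_of_ne hd (Ne.symm hd0)
    have hαpos : 0 < α := lt_of_le_of_ne hα0 (Ne.symm hα0')
    have hcoslt : Real.cos α < 1 := by
      have := Real.cos_lt_cos_of_nonneg_of_le_pi (le_refl 0) (by linarith [Real.pi_pos]) hαpos
      rwa [Real.cos_zero] at this
    have hylt : y < d := by
      calc y = d * Real.cos α := rfl
      _ < d * 1 := by exact mul_lt_mul_of_pos_left hcoslt hdpos
      _ = d := mul_one d
    have hstrict := hmono (Set.mem_Ici.2 hy0) (Set.mem_Ici.2 hd) hylt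
    simp only at hstrict
    have hlt : (arcosh (A * Real.cosh y)) ^ 2 + (d * Real.sin α) ^ 2
        < (arcosh (A * Real.cosh d)) ^ 2 := by rw [hvert]; linarith
    have : Real.sqrt ((arcosh (A * Real.cosh y)) ^ 2 + (d * Real.sin α) ^ 2)
        < arcosh (A * Real.cosh d) := by
      calc Real.sqrt ((arcosh (A * Real.cosh y)) ^ 2 + (d * Real.sin α) ^ 2)
          < Real.sqrt ((arcosh (A * Real.cosh d)) ^ 2) := Real.sqrt_lt_sqrt hX0 hlt
        _ = arcosh (A * Real.cosh d) := Real.sqrt_sq hFd0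
    rw [heq] at this
    exact lt_irrefl _ this
  · rintro (rfl | rfl)
    · simp only [zero_mul, hy, zero_mul]
      rw [show (0 : ℝ) ^ 2 = 0 by ring, add_zero, Real.sqrt_sq (arcosh_nonneg (hcA 0))]
    · rw [hy, Real.cos_zero, Real.sin_zero, mul_one, mul_zero]
      rw [show (0 : ℝ) ^ 2 = 0 by ring, add_zero, Real.sqrt_sq (arcosh_nonneg (hcA d))]
end

section
/- Let o, o₀ be points in H² ⊂ H² × ℝ with l = |o - o₀| ≥ l₀ > 0, let w₀ be the geodesic of H² through o₀ perpendicular to o o₀, and let σ be a geodesic line in the vertical plane w₀ × ℝ through (o₀, 0) making angle α ≥ α₀ > 0 with w₀ × {0}. For d ≥ 1, let t ∈ w₀ with |o₀ - t| = d and s ∈ σ with distance d from o₀ along σ. Then Δ := dist_{H²}(o, t) − dist_{H²×ℝ}(o, s) ≥ δ₀ for some δ₀ > 0 depending only on l₀ and α₀ (not on l, α, d). -/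
lemma le_arcosh {x m : ℝ} (hx : 1 ≤ x) (hm : 0 ≤ m) (h : Real.cosh m ≤ x) : m ≤ arcosh x := by
  have := cosh_arcosh hx
  have h2 : Real.cosh m ≤ Real.cosh (arcosh x) := by rw [this]; exact h
  have h3 := Real.cosh_le_cosh.mp h2
  rwa [abs_of_nonneg hm, abs_of_nonneg (arcosh_nonneg hx)] at h3

lemma arcosh_le {x m : ℝ} (hx : 1 ≤ x) (hm : 0 ≤ m) (h : x ≤ Real.cosh m) : arcosh x ≤ m := by
  have h2 : Real.cosh (arcosh x) ≤ Real.cosh m := by rw [cosh_arcosh hx]; exact h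
  have h3 := Real.cosh_le_cosh.mp h2
  rwa [abs_of_nonneg hm, abs_of_nonneg (arcosh_nonneg hx)] at h3

/-- `eˣ - 1 ≤ x eˣ` for `x ≥ 0`. -/
lemma exp_sub_one_le_mul {x : ℝ} (hx : 0 ≤ x) : Real.exp x - 1 ≤ x * Real.exp x := by
  have h := Real.add_one_le_exp (-x)
  have h2 : Real.exp (-x) = (Real.exp x)⁻¹ := Real.exp_neg x
  have h3 : 0 < Real.exp x := Real.exp_pos x
  rw [h2] at h
  have := mul_le_mul_of_nonneg_right h h3.le
  rw [inv_mul_cancel₀ h3.ne'] at this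
  nlinarith

/-- `u³ ≤ 3 (u cosh u - sinh u)` for `u ≥ 0`. -/
lemma cube_le_cosh_sinh {u : ℝ} (hu : 0 ≤ u) : u ^ 3 ≤ 3 * (u * Real.cosh u - Real.sinh u) := by
  set f : ℝ → ℝ := fun v => 3 * (v * Real.cosh v - Real.sinh v) - v ^ 3 with hf
  have hd : ∀ v : ℝ, HasDerivAt f (3 * v * Real.sinh v - 3 * v ^ 2) v := by
    intro v
    have h1 : HasDerivAt (fun w : ℝ => w * Real.cosh w) (Real.cosh v + v * Real.sinh v) v := by
      exact ((hasDerivAt_id' v).mul (Real.hasDerivAt_cosh v)).congr_deriv (by ring)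
    have h2 : HasDerivAt (fun w : ℝ => w * Real.cosh w - Real.sinh w)
        (Real.cosh v + v * Real.sinh v - Real.cosh v) v := h1.sub (Real.hasDerivAt_sinh v)
    have h3 := (h2.const_mul (3:ℝ)).sub (hasDerivAt_pow 3 v)
    refine h3.congr_deriv ?_; symm
    push_cast
    ring
  have hmono : MonotoneOn f (Set.Ici 0) := by
    apply monotoneOn_of_deriv_nonneg (convex_Ici 0)
    · exact (Continuous.continuousOn (by continuity))
    · intro v hv
      exact ((hd v).differentiableAt).differentiableWithinAt
    · intro v hv
      rw [interior_Ici, Set.mem_Ioi] at hv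
      rw [(hd v).deriv]
      have := Real.self_le_sinh_iff.mpr hv.le
      nlinarith
  have h0 : f 0 ≤ f u := hmono (Set.self_mem_Ici) hu hu
  simp [hf] at h0
  nlinarith [h0]

noncomputable def gfun (t : ℝ) : ℝ := Real.cosh (Real.sqrt t) - t ^ 2 / 24

noncomputable def gderiv (t : ℝ) : ℝ := Real.sinh (Real.sqrt t) * (2 * Real.sqrt t)⁻¹ - t / 12

noncomputable def gderiv2 (t : ℝ) : ℝ :=
  Real.cosh (Real.sqrt t) / (4 * t) - Real.sinh (Real.sqrt t) / (4 * t * Real.sqrt t) - 1 / 12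

lemma gfun_hasDeriv {t : ℝ} (ht : 0 < t) : HasDerivAt gfun (gderiv t) t := by
  have hs : HasDerivAt Real.sqrt (1 / (2 * Real.sqrt t)) t := Real.hasDerivAt_sqrt ht.ne'
  have h1 : HasDerivAt (fun t => Real.cosh (Real.sqrt t))
      (Real.sinh (Real.sqrt t) * (1 / (2 * Real.sqrt t))) t := hs.cosh
  have h2 : HasDerivAt (fun t : ℝ => t ^ 2 / 24) (2 * t / 24) t := by
    simpa using (hasDerivAt_pow 2 t).div_const 24
  have h3 := h1.sub h2
  refine h3.congr_deriv ?_; symm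
  rw [gderiv]
  have hst : Real.sqrt t ≠ 0 := by positivity
  field_simp
  ring

lemma gderiv_hasDeriv {t : ℝ} (ht : 0 < t) : HasDerivAt gderiv (gderiv2 t) t := by
  obtain ⟨u, hupos, rfl⟩ : ∃ u : ℝ, 0 < u ∧ u ^ 2 = t :=
    ⟨Real.sqrt t, Real.sqrt_pos.mpr ht, Real.sq_sqrt ht.le⟩
  have hsq : Real.sqrt (u ^ 2) = u := Real.sqrt_sq hupos.le
  have hune : u ≠ 0 := hupos.ne'
  have hs : HasDerivAt Real.sqrt (1 / (2 * u)) (u ^ 2) := by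
    simpa [hsq] using Real.hasDerivAt_sqrt (show (u:ℝ) ^ 2 ≠ 0 by positivity)
  have h2 : HasDerivAt (fun t => Real.sinh (Real.sqrt t))
      (Real.cosh u * (1 / (2 * u))) (u ^ 2) := by
    simpa [hsq] using hs.sinh
  have h3 : HasDerivAt (fun t : ℝ => 2 * Real.sqrt t) (2 * (1 / (2 * u))) (u ^ 2) :=
    hs.const_mul 2
  have h4 : HasDerivAt (fun t : ℝ => (2 * Real.sqrt t)⁻¹)
      (-(2 * (1 / (2 * u))) / (2 * u) ^ 2) (u ^ 2) := by
    have := h3.inv (show 2 * Real.sqrt (u ^ 2) ≠ 0 by rw [hsq]; positivity)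
    rw [hsq] at this; exact this
  have h5 := h2.mul h4
  have h6 := h5.sub ((hasDerivAt_id (u ^ 2)).div_const 12)
  simp only [hsq, id_eq] at h5 h6
  refine h6.congr_deriv ?_; symm
  rw [gderiv2, hsq]
  field_simp
  ring

lemma gderiv2_nonneg {t : ℝ} (ht : 0 < t) : 0 ≤ gderiv2 t := by
  obtain ⟨u, hupos, rfl⟩ : ∃ u : ℝ, 0 < u ∧ u ^ 2 = t :=
    ⟨Real.sqrt t, Real.sqrt_pos.mpr ht, Real.sq_sqrt ht.le⟩
  have hsq : Real.sqrt (u ^ 2) = u := Real.sqrt_sq hupos.le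
  have key := cube_le_cosh_sinh hupos.le
  have hexp : gderiv2 (u ^ 2)
      = (3 * (u * Real.cosh u - Real.sinh u) - u ^ 3) / (12 * u ^ 3) := by
    rw [gderiv2, hsq]
    field_simp
    ring
  rw [hexp]
  apply div_nonneg (by linarith) (by positivity)

lemma gfun_convex : ConvexOn ℝ (Set.Ici 0) gfun := by
  apply convexOn_of_deriv2_nonneg (convex_Ici 0)
  · apply Continuous.continuousOn
    exact (Real.continuous_cosh.comp Real.continuous_sqrt).sub (by continuity)
  · rw [interior_Ici]
    intro t ht
    exact (gfun_hasDeriv ht).differentiableAt.differentiableWithinAt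
  · rw [interior_Ici]
    intro t ht
    have hev : deriv gfun =ᶠ[nhds t] gderiv :=
      Filter.eventuallyEq_of_mem (Ioi_mem_nhds ht) (fun s hs => (gfun_hasDeriv hs).deriv)
    exact ((gderiv_hasDeriv ht).congr_of_eventuallyEq hev).differentiableAt.differentiableWithinAt
  · rw [interior_Ici]
    intro t ht
    have hev : deriv gfun =ᶠ[nhds t] gderiv :=
      Filter.eventuallyEq_of_mem (Ioi_mem_nhds ht) (fun s hs => (gfun_hasDeriv hs).deriv)
    have hd2 : deriv (deriv gfun) t = gderiv2 t :=
      ((gderiv_hasDeriv ht).congr_of_eventuallyEq hev).deriv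
    have : deriv^[2] gfun t = deriv (deriv gfun) t := rfl
    rw [this, hd2]
    exact gderiv2_nonneg ht

/-- Strong midpoint convexity of `cosh ∘ sqrt`. -/
lemma strong_cvx {u v lam : ℝ} (hu : 0 ≤ u) (hv : 0 ≤ v) (hlam : 0 ≤ lam) (hlam1 : lam ≤ 1) :
    Real.cosh (Real.sqrt (lam * u + (1 - lam) * v)) + lam * (1 - lam) * (u - v) ^ 2 / 24 ≤
      lam * Real.cosh (Real.sqrt u) + (1 - lam) * Real.cosh (Real.sqrt v) := by
  have h := gfun_convex.2 (Set.mem_Ici.mpr hu) (Set.mem_Ici.mpr hv) hlam (by linarith)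
    (by ring : lam + (1 - lam) = 1)
  simp only [smul_eq_mul, gfun] at h
  nlinarith [h]

/-- Master lemma: quantitative law-of-cosines comparison. -/
lemma master_lemma {x y b : ℝ} (hx : 0 ≤ x) (hy : 0 ≤ y) (hb : 0 ≤ b) (hb1 : b ≤ 1) :
    Real.cosh (Real.sqrt (x ^ 2 + y ^ 2 + 2 * b * x * y)) + (1 - b ^ 2) * x ^ 2 * y ^ 2 / 6 ≤
      Real.cosh x * Real.cosh y + b * (Real.sinh x * Real.sinh y) := by
  have key := strong_cvx (u := (x + y) ^ 2) (v := (x - y) ^ 2) (lam := (1 + b) / 2)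
    (by positivity) (by positivity) (by linarith) (by linarith)
  have harg : (1 + b) / 2 * (x + y) ^ 2 + (1 - (1 + b) / 2) * (x - y) ^ 2
      = x ^ 2 + y ^ 2 + 2 * b * x * y := by ring
  have hs1 : Real.sqrt ((x + y) ^ 2) = x + y := Real.sqrt_sq (by linarith)
  have hs2 : Real.cosh (Real.sqrt ((x - y) ^ 2)) = Real.cosh (x - y) := by
    rw [Real.sqrt_sq_eq_abs, Real.cosh_abs]
  rw [harg, hs1, hs2, Real.cosh_add, Real.cosh_sub] at key
  nlinarith [key]

/-- `cosh (X + m) ≤ cosh X · e^m` for `m ≥ 0`. -/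
lemma cosh_add_le (X : ℝ) {m : ℝ} (hm : 0 ≤ m) :
    Real.cosh (X + m) ≤ Real.cosh X * Real.exp m := by
  rw [Real.cosh_add]
  have h1 : Real.sinh X ≤ Real.cosh X := by
    have := Real.cosh_sub_sinh X
    nlinarith [Real.exp_pos (-X)]
  have h2 : 0 ≤ Real.sinh m := Real.sinh_nonneg_iff.mpr hm
  have h3 : Real.cosh m + Real.sinh m = Real.exp m := Real.cosh_add_sinh m
  nlinarith [Real.cosh_pos X]

lemma cosh_mul_cosh_le {x y : ℝ} (hx : 0 ≤ x) (hy : 0 ≤ y) :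
    Real.cosh x * Real.cosh y ≤ Real.cosh (x + y) := by
  rw [Real.cosh_add]
  nlinarith [Real.sinh_nonneg_iff.mpr hx, Real.sinh_nonneg_iff.mpr hy]

lemma cosh_le_exp_of_nonneg {x : ℝ} (hx : 0 ≤ x) : Real.cosh x ≤ Real.exp x := by
  rw [Real.cosh_eq]
  have : Real.exp (-x) ≤ Real.exp x := Real.exp_le_exp.mpr (by linarith)
  linarith [this]

/-- `cosh (y + log (cosh x)) ≤ cosh x · cosh y`. -/
lemma cosh_add_log_le (x y : ℝ) :
    Real.cosh (y + Real.log (Real.cosh x)) ≤ Real.cosh x * Real.cosh y := by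
  set C := Real.cosh x with hC
  have hc : 0 < C := Real.cosh_pos x
  have hc1 : 1 ≤ C := Real.one_le_cosh x
  have hEy : 0 < Real.exp y := Real.exp_pos y
  rw [Real.cosh_eq, Real.cosh_eq, Real.exp_add, Real.exp_log hc, Real.exp_neg, Real.exp_add,
    Real.exp_log hc, Real.exp_neg]
  have h2 : (Real.exp y * C)⁻¹ ≤ C * (Real.exp y)⁻¹ := by
    rw [mul_inv]
    rw [mul_comm]
    apply mul_le_mul_of_nonneg_right _ (by positivity)
    rw [inv_le_iff_one_le_mul₀ hc]
    nlinarith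
  nlinarith [h2]

/-- `p sinh q ≤ q sinh p` for `0 ≤ q ≤ p`. -/
lemma sinh_mul_le {p q : ℝ} (hq : 0 ≤ q) (hpq : q ≤ p) : p * Real.sinh q ≤ q * Real.sinh p := by
  have h1 : Real.sinh p = Real.sinh q * Real.cosh (p - q) + Real.cosh q * Real.sinh (p - q) := by
    have := Real.sinh_add q (p - q)
    rw [show q + (p - q) = p by ring] at this
    exact this
  have h2 : p - q ≤ Real.sinh (p - q) := Real.self_le_sinh_iff.mpr (by linarith)
  have h3 : 1 ≤ Real.cosh (p - q) := Real.one_le_cosh _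
  have h4 : Real.sinh q ≤ q * Real.cosh q := by nlinarith [cube_le_cosh_sinh hq, pow_nonneg hq 3]
  have h5 : 0 ≤ Real.sinh q := Real.sinh_nonneg_iff.mpr hq
  nlinarith [mul_nonneg hq h5, Real.cosh_pos q, mul_le_mul_of_nonneg_left h2 (mul_nonneg hq (Real.cosh_pos q).le)]



/-- Case 1 arithmetic: `b` large. -/
lemma case1_est {μ Λ₀ κ Λ l d b r A B δ : ℝ}
    (hμ : 0 < μ) (hd : 1 ≤ d) (hl : 0 < l) (hb0 : 0 ≤ b) (hbd : b ≤ d)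
    (he : μ * d ≤ d - b) (hΛ0 : 0 ≤ Λ) (hΛΛ₀ : Λ₀ ≤ Λ) (hΛ₀0 : 0 < Λ₀)
    (hκ0 : 0 < κ) (hκl : κ * l ≤ Λ)
    (hr0 : 0 ≤ r) (hr : 8 * r ≤ μ * min Λ₀ 1)
    (hAB : B + ((d - b) - r) ≤ A) (hA_lb : d + Λ ≤ A) (hB_lb : b + Λ ≤ B)
    (hδ : 4 * δ ≤ μ * min Λ₀ κ) (hδ0 : 0 ≤ δ) :
    B ^ 2 + (d ^ 2 - b ^ 2) + 2 * δ * (l + d) ≤ A ^ 2 := by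
  have hd0 : (0:ℝ) ≤ d := by linarith
  have hmin1 : min Λ₀ 1 ≤ 1 := min_le_right _ _
  have hminΛ : min Λ₀ 1 ≤ Λ := le_trans (min_le_left _ _) hΛΛ₀
  have hmin0 : 0 ≤ min Λ₀ 1 := le_min hΛ₀0.le zero_le_one
  have hμmin1 : μ * min Λ₀ 1 ≤ μ * 1 := mul_le_mul_of_nonneg_left hmin1 hμ.le
  have hrμ : r ≤ μ / 8 := by linarith
  have hμd : μ * 1 ≤ μ * d := mul_le_mul_of_nonneg_left hd hμ.le
  have hm0 : 0 ≤ (d - b) - r := by linarith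
  have hsum : d + b + 2 * Λ ≤ A + B := by linarith
  have hsum0 : 0 ≤ d + b + 2 * Λ := by linarith
  have p1 : ((d - b) - r) * (d + b + 2 * Λ) ≤ (A - B) * (A + B) :=
    mul_le_mul (by linarith) hsum hsum0 (by linarith)
  have p1' : ((d - b) - r) * (d + b + 2 * Λ)
      = (d ^ 2 - b ^ 2) + 2 * Λ * (d - b) - r * (d + b) - 2 * Λ * r := by ring
  have p2 : (A - B) * (A + B) = A ^ 2 - B ^ 2 := by ring
  have p3 : 2 * Λ * (μ * d) ≤ 2 * Λ * (d - b) :=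
    mul_le_mul_of_nonneg_left he (by linarith)
  -- r(d+b) ≤ μΛd/4
  have hμΛ : μ * min Λ₀ 1 ≤ μ * Λ := mul_le_mul_of_nonneg_left hminΛ hμ.le
  have h8r : 8 * r ≤ μ * Λ := by linarith
  have p4a : r * (d + b) ≤ r * (2 * d) :=
    mul_le_mul_of_nonneg_left (by linarith) hr0
  have p4b : (8 * r) * d ≤ (μ * Λ) * d := mul_le_mul_of_nonneg_right h8r hd0
  have p4 : r * (d + b) ≤ μ * Λ * d / 4 := by linarith
  -- 2Λr ≤ μΛd/4
  have p5a : 2 * Λ * r ≤ 2 * Λ * (μ / 8) :=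
    mul_le_mul_of_nonneg_left hrμ (by linarith)
  have p5b : 0 ≤ (d - 1) * (μ * Λ) :=
    mul_nonneg (by linarith) (mul_nonneg hμ.le hΛ0)
  have p5 : 2 * Λ * r ≤ μ * Λ * d / 4 := by linarith only [p5a, p5b]
  -- δ bound : 2δ(l+d) ≤ μΛd
  have hminκ : min Λ₀ κ ≤ κ := min_le_right _ _
  have hminΛ₀ : min Λ₀ κ ≤ Λ₀ := min_le_left _ _
  have r1 : (4 * δ) * l ≤ (μ * min Λ₀ κ) * l := mul_le_mul_of_nonneg_right hδ hl.le
  have r2 : (4 * δ) * d ≤ (μ * min Λ₀ κ) * d := mul_le_mul_of_nonneg_right hδ hd0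
  have r3a : min Λ₀ κ * l ≤ κ * l := mul_le_mul_of_nonneg_right hminκ hl.le
  have r3b : min Λ₀ κ * l ≤ Λ := by linarith
  have r3 : μ * (min Λ₀ κ * l) ≤ μ * Λ := mul_le_mul_of_nonneg_left r3b hμ.le
  have r4 : 0 ≤ (d - 1) * (μ * Λ) := p5b
  have r5a : min Λ₀ κ * d ≤ Λ * d :=
    mul_le_mul_of_nonneg_right (le_trans hminΛ₀ hΛΛ₀) hd0
  have r5 : μ * (min Λ₀ κ * d) ≤ μ * (Λ * d) := mul_le_mul_of_nonneg_left r5a hμ.le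
  have pδ : 2 * δ * (l + d) ≤ μ * Λ * d := by linarith only [r1, r2, r3, r4, r5]
  linarith only [p1, p1', p2, p3, p4, p5, pδ, mul_nonneg (mul_nonneg hμ.le hΛ0) hd0]

/-- Case 2 arithmetic: `d` large. -/
lemma case2_est {Λ₀ κ T₁ Λ l d b A B δ : ℝ}
    (hd : 1 ≤ d) (hl : 0 < l) (hb0 : 0 ≤ b) (hbT : b ≤ T₁)
    (hΛ0 : 0 ≤ Λ) (hΛΛ₀ : Λ₀ ≤ Λ) (hΛl1 : l - 1 ≤ Λ) (hκd : 2 * T₁ + 4 ≤ κ * d)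
    (hκl : κ * l ≤ Λ) (hκ0 : 0 < κ)
    (hA_lb : d + Λ ≤ A) (hB_ub : B ≤ l + b) (hB0 : 0 ≤ B)
    (hδ : 2 * δ ≤ min Λ₀ 2) (hδ0 : 0 ≤ δ) :
    B ^ 2 + (d ^ 2 - b ^ 2) + 2 * δ * (l + d) ≤ A ^ 2 := by
  have hd0 : (0:ℝ) ≤ d := by linarith
  have hA2 : (d + Λ) ^ 2 ≤ A ^ 2 := pow_le_pow_left₀ (by linarith) hA_lb 2
  have hB2 : B ^ 2 ≤ (l + b) ^ 2 := pow_le_pow_left₀ hB0 hB_ub 2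
  have hΛsq : l ^ 2 - 2 * l ≤ Λ ^ 2 := by
    rcases le_or_gt l 2 with h | h
    · have := mul_nonneg hl.le (show (0:ℝ) ≤ 2 - l by linarith)
      linarith only [this, sq_nonneg Λ]
    · have := pow_le_pow_left₀ (show (0:ℝ) ≤ l - 1 by linarith) hΛl1 2
      linarith only [this]
  have p1 : Λ₀ * d ≤ Λ * d := mul_le_mul_of_nonneg_right hΛΛ₀ hd0
  have p2 : (2 * T₁ + 4) * l ≤ (κ * d) * l := mul_le_mul_of_nonneg_right hκd hl.le
  have p4 : d * (κ * l) ≤ d * Λ := mul_le_mul_of_nonneg_left hκl hd0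
  have p5 : 2 * l * b ≤ 2 * l * T₁ := mul_le_mul_of_nonneg_left hbT (by linarith)
  have hδΛ : 2 * δ ≤ Λ₀ := le_trans hδ (min_le_left _ _)
  have hδ2 : 2 * δ ≤ 2 := le_trans hδ (min_le_right _ _)
  have pδ1 : (2 * δ) * d ≤ Λ₀ * d := mul_le_mul_of_nonneg_right hδΛ hd0
  have pδ2 : (2 * δ) * l ≤ 2 * l := mul_le_mul_of_nonneg_right hδ2 hl.le
  linarith only [hA2, hB2, hΛsq, p1, p2, p4, p5, pδ1, pδ2]

/-- Case 3 arithmetic: `l` large. -/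
lemma case3_est {ν d₁ l₂ l d b A B δ : ℝ}
    (hν : 0 < ν) (hd : 1 ≤ d) (hdd₁ : d ≤ d₁) (hb0 : 0 ≤ b)
    (hl₂ : (d₁ ^ 2 + d₁) / ν ≤ l₂) (hll₂ : l₂ ≤ l) (hl : 0 < l)
    (hAB : B + ν ≤ A) (hB_l : l ≤ B)
    (hδ : 2 * δ ≤ min ν 1) (hδ0 : 0 ≤ δ) :
    B ^ 2 + (d ^ 2 - b ^ 2) + 2 * δ * (l + d) ≤ A ^ 2 := by
  have hd0 : (0:ℝ) ≤ d := by linarith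
  have hlν : d₁ ^ 2 + d₁ ≤ l * ν := by
    rw [div_le_iff₀ hν] at hl₂
    have := mul_le_mul_of_nonneg_right hll₂ hν.le
    linarith
  have hsq : ν * (2 * l) ≤ (A - B) * (A + B) :=
    mul_le_mul (by linarith) (by linarith) (by linarith) (by linarith)
  have p2 : (A - B) * (A + B) = A ^ 2 - B ^ 2 := by ring
  have hd₁d : d ^ 2 ≤ d₁ ^ 2 := pow_le_pow_left₀ hd0 hdd₁ 2
  have hδν : 2 * δ ≤ ν := le_trans hδ (min_le_left _ _)
  have hδ1 : 2 * δ ≤ 1 := le_trans hδ (min_le_right _ _)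
  have pδ1 : (2 * δ) * l ≤ ν * l := mul_le_mul_of_nonneg_right hδν hl.le
  have pδ2 : (2 * δ) * d ≤ 1 * d := mul_le_mul_of_nonneg_right hδ1 hd0
  linarith only [hsq, p2, hd₁d, pδ1, pδ2, hlν, sq_nonneg b, hdd₁, hd]

/-- Case 4: the compact box, via the master lemma. -/
lemma case4_est {l₀ μ Λ₀ T₁ d₁ l₂ θ₀ Θ₀ E χ Λ l d b A B δ : ℝ}
    (hl₀ : 0 < l₀) (hl₀l : l₀ ≤ l) (hll₂ : l ≤ l₂) (hd : 1 ≤ d) (hdd₁ : d ≤ d₁)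
    (hb0 : 0 ≤ b) (hbT : b ≤ T₁) (hbd : b ≤ d) (hμ : 0 < μ)
    (he : μ * d ≤ d - b) (hμd : μ ≤ μ * d)
    (hΛ0 : 0 ≤ Λ) (hΛΛ₀ : Λ₀ ≤ Λ) (hΛ₀0 : 0 < Λ₀)
    (hB_lb : b + Λ ≤ B) (hB_l : l ≤ B) (hB_ub : B ≤ l + b)
    (hcoshA : Real.cosh A = Real.cosh l * Real.cosh d)
    (hcoshB : Real.cosh B = Real.cosh l * Real.cosh b)
    (hAarc : ∀ m : ℝ, 0 ≤ m → Real.cosh m ≤ Real.cosh l * Real.cosh d → m ≤ A)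
    (hBarc : ∀ m : ℝ, 0 ≤ m → Real.cosh m ≤ Real.cosh l * Real.cosh b → m ≤ B)
    (hθ₀def : θ₀ = Real.sinh Λ₀ / (Real.cosh T₁ * Real.cosh (l₂ + T₁)))
    (hΘ₀def : Θ₀ = θ₀ * l₀ ^ 2 * μ ^ 2 / 6)
    (hEdef : E = Real.exp (l₂ + d₁))
    (hχ0 : 0 < χ) (hχ1 : χ ≤ 1) (hχE : 3 * E * χ ≤ Θ₀)
    (hδ : 2 * δ ≤ χ) (hδ0 : 0 ≤ δ) :
    B ^ 2 + (d ^ 2 - b ^ 2) + 2 * δ * (l + d) ≤ A ^ 2 := by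
  have hl : 0 < l := lt_of_lt_of_le hl₀ hl₀l
  have hB0 : 0 < B := lt_of_lt_of_le hl hB_l
  have hbB : b < B := by linarith [lt_of_lt_of_le hΛ₀0 hΛΛ₀]
  have hsinhB : 0 < Real.sinh B := Real.sinh_pos_iff.mpr hB0
  have hcoshb : 0 < Real.cosh b := Real.cosh_pos b
  have hsinhb : 0 ≤ Real.sinh b := Real.sinh_nonneg_iff.mpr hb0
  set β := Real.sinh b * Real.cosh B / (Real.cosh b * Real.sinh B) with hβdef
  have hden : 0 < Real.cosh b * Real.sinh B := by positivity
  have hβ0 : 0 ≤ β := by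
    apply div_nonneg _ hden.le
    exact mul_nonneg hsinhb (Real.cosh_pos B).le
  have hsinhBb : 0 ≤ Real.sinh (B - b) := Real.sinh_nonneg_iff.mpr (by linarith)
  have hsinhBbeq := Real.sinh_sub B b
  have hβ1 : β ≤ 1 := by
    rw [hβdef, div_le_one hden]
    linarith only [hsinhBb, hsinhBbeq]
  -- the law-of-cosines identity
  have hid : Real.cosh A = Real.cosh B * Real.cosh (d - b)
      + β * (Real.sinh B * Real.sinh (d - b)) := by
    rw [hcoshA, hβdef, hcoshB]
    have h1 : Real.cosh d = Real.cosh (b + (d - b)) := by norm_num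
    rw [h1, Real.cosh_add]
    field_simp
  have hml := master_lemma (x := B) (y := d - b) (b := β) hB0.le (by linarith) hβ0 hβ1
  -- b ≤ β B
  have hβB : b ≤ β * B := by
    have hsl := sinh_mul_le (q := B - b) (p := B + b) (by linarith) (by linarith)
    rw [Real.sinh_sub, Real.sinh_add] at hsl
    rw [hβdef, div_mul_eq_mul_div, le_div_iff₀ hden]
    linarith only [hsl]
  -- monotone step of the sqrt argument
  have harg : B ^ 2 + (d ^ 2 - b ^ 2) ≤ B ^ 2 + (d - b) ^ 2 + 2 * β * B * (d - b) := by
    have h1 : b * (d - b) ≤ (β * B) * (d - b) :=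
      mul_le_mul_of_nonneg_right hβB (by linarith)
    linarith only [h1]
  have hb2d2 : b ^ 2 ≤ d ^ 2 := pow_le_pow_left₀ hb0 hbd 2
  have harg0 : 0 ≤ B ^ 2 + (d ^ 2 - b ^ 2) := by
    linarith only [sq_nonneg B, hb2d2]
  have hGmono : Real.cosh (Real.sqrt (B ^ 2 + (d ^ 2 - b ^ 2)))
      ≤ Real.cosh (Real.sqrt (B ^ 2 + (d - b) ^ 2 + 2 * β * B * (d - b))) := by
    rw [Real.cosh_le_cosh, abs_of_nonneg (Real.sqrt_nonneg _), abs_of_nonneg (Real.sqrt_nonneg _)]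
    exact Real.sqrt_le_sqrt harg
  -- defect lower bound
  have hβub : θ₀ ≤ 1 - β := by
    have hβalt : 1 - β = Real.sinh (B - b) / (Real.cosh b * Real.sinh B) := by
      rw [hβdef, Real.sinh_sub]
      field_simp
    have s1 : Real.sinh Λ₀ ≤ Real.sinh (B - b) := by
      rw [Real.sinh_le_sinh]; linarith
    have s2 : Real.cosh b ≤ Real.cosh T₁ := by
      rw [Real.cosh_le_cosh, abs_of_nonneg hb0, abs_of_nonneg (by linarith : (0:ℝ) ≤ T₁)]
      exact hbT
    have s3 : Real.sinh B ≤ Real.cosh (l₂ + T₁) := by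
      calc Real.sinh B ≤ Real.cosh B := by
            linarith only [Real.cosh_sub_sinh B, Real.exp_pos (-B)]
        _ ≤ Real.cosh (l₂ + T₁) := by
            rw [Real.cosh_le_cosh, abs_of_nonneg hB0.le,
              abs_of_nonneg (by linarith : (0:ℝ) ≤ l₂ + T₁)]
            linarith
    have s4 : Real.cosh b * Real.sinh B ≤ Real.cosh T₁ * Real.cosh (l₂ + T₁) :=
      mul_le_mul s2 s3 hsinhB.le (Real.cosh_pos T₁).le
    rw [hβalt, hθ₀def]
    exact div_le_div₀ hsinhBb s1 hden s4
  have hΘ : Θ₀ ≤ (1 - β ^ 2) * B ^ 2 * (d - b) ^ 2 / 6 := by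
    have h1 : 1 - β ≤ 1 - β ^ 2 := by
      have := mul_nonneg hβ0 (by linarith : (0:ℝ) ≤ 1 - β)
      linarith only [this]
    have h2 : θ₀ ≤ 1 - β ^ 2 := by linarith
    have hθ0 : 0 ≤ θ₀ := by
      rw [hθ₀def]; positivity
    have hl₀B : l₀ ^ 2 ≤ B ^ 2 := pow_le_pow_left₀ hl₀.le (le_trans hl₀l hB_l) 2
    have hμdb : μ ^ 2 ≤ (d - b) ^ 2 := pow_le_pow_left₀ hμ.le (by linarith) 2
    have q1 : θ₀ * l₀ ^ 2 ≤ (1 - β ^ 2) * B ^ 2 :=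
      mul_le_mul h2 hl₀B (by positivity) (by linarith)
    have q2 : θ₀ * l₀ ^ 2 * μ ^ 2 ≤ (1 - β ^ 2) * B ^ 2 * (d - b) ^ 2 := by
      apply mul_le_mul q1 hμdb (by positivity)
      have : (0:ℝ) ≤ (1 - β ^ 2) * B ^ 2 := mul_nonneg (by linarith) (sq_nonneg B)
      linarith
    rw [hΘ₀def]
    linarith
  -- A ≥ G + χ
  set G := Real.sqrt (B ^ 2 + (d ^ 2 - b ^ 2)) with hGdef
  have hG0 : 0 ≤ G := Real.sqrt_nonneg _
  have hGsq : G ^ 2 = B ^ 2 + (d ^ 2 - b ^ 2) := Real.sq_sqrt harg0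
  have hGld : G ≤ l + d := by
    rw [hGdef, show l + d = Real.sqrt ((l + d) ^ 2) from (Real.sqrt_sq (by linarith)).symm]
    apply Real.sqrt_le_sqrt
    have w1 : B ^ 2 ≤ (l + b) ^ 2 := pow_le_pow_left₀ hB0.le hB_ub 2
    have w2 : l * b ≤ l * d := mul_le_mul_of_nonneg_left hbd hl.le
    linarith only [w1, w2]
  have hcoshG : Real.cosh G ≤ E := by
    rw [hEdef]
    calc Real.cosh G ≤ Real.cosh (l₂ + d₁) := by
          rw [Real.cosh_le_cosh, abs_of_nonneg hG0,
            abs_of_nonneg (by linarith : (0:ℝ) ≤ l₂ + d₁)]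
          linarith
      _ ≤ Real.exp (l₂ + d₁) := cosh_le_exp_of_nonneg (by linarith)
  have hE0 : 0 < E := by rw [hEdef]; exact Real.exp_pos _
  have hAG : G + χ ≤ A := by
    apply hAarc _ (by linarith)
    have h1 : Real.cosh (G + χ) ≤ Real.cosh G * Real.exp χ := cosh_add_le G hχ0.le
    have h2 : Real.exp χ - 1 ≤ χ * Real.exp χ := exp_sub_one_le_mul hχ0.le
    have h3 : Real.exp χ ≤ 3 := by
      calc Real.exp χ ≤ Real.exp 1 := Real.exp_le_exp.mpr hχ1
        _ ≤ 3 := by linarith [Real.exp_one_lt_d9]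
    have h4 : Real.exp χ - 1 ≤ 3 * χ := by
      have := mul_le_mul_of_nonneg_left h3 hχ0.le
      linarith only [h2, this]
    have h5 : Real.cosh G * (Real.exp χ - 1) ≤ E * (3 * χ) :=
      mul_le_mul hcoshG h4 (by linarith only [Real.one_le_exp hχ0.le]) hE0.le
    have h6 : Real.cosh (G + χ) ≤ Real.cosh G + Θ₀ := by
      linarith only [h1, h5, hχE]
    have h7 : Real.cosh G + Θ₀ ≤ Real.cosh l * Real.cosh d := by
      rw [← hcoshA, hid]
      have step : Real.cosh G + Θ₀
          ≤ Real.cosh (Real.sqrt (B ^ 2 + (d - b) ^ 2 + 2 * β * B * (d - b)))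
            + (1 - β ^ 2) * B ^ 2 * (d - b) ^ 2 / 6 := by
        rw [hGdef] at hGmono ⊢
        linarith [hGmono, hΘ]
      exact le_trans step hml
    linarith
  -- Pythagoras for B
  have hBpyth : l ^ 2 + b ^ 2 ≤ B ^ 2 := by
    have h := master_lemma (x := l) (y := b) (b := 0) hl.le hb0 le_rfl zero_le_one
    have hx2 : l ^ 2 + b ^ 2 + 2 * 0 * l * b = l ^ 2 + b ^ 2 := by ring
    rw [hx2] at h
    have hlb2 : (0:ℝ) ≤ l ^ 2 * b ^ 2 := by positivity
    have h1 : Real.sqrt (l ^ 2 + b ^ 2) ≤ B := by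
      apply hBarc _ (Real.sqrt_nonneg _)
      linarith only [h, hlb2]
    have := pow_le_pow_left₀ (Real.sqrt_nonneg (l ^ 2 + b ^ 2)) h1 2
    rwa [Real.sq_sqrt (by positivity : (0:ℝ) ≤ l ^ 2 + b ^ 2)] at this
  -- G ≥ (l+d)/2
  have hGge : (l + d) / 2 ≤ G := by
    rw [hGdef, show (l + d) / 2 = Real.sqrt (((l + d) / 2) ^ 2) from
      (Real.sqrt_sq (by linarith)).symm]
    apply Real.sqrt_le_sqrt
    linarith only [hBpyth, sq_nonneg (l - d), sq_nonneg l, sq_nonneg d]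
  -- conclusion
  have hfin1 : (G + χ) ^ 2 ≤ A ^ 2 := pow_le_pow_left₀ (by linarith) hAG 2
  have hfin2 : (l + d) * χ ≤ (2 * G) * χ :=
    mul_le_mul_of_nonneg_right (by linarith) hχ0.le
  have hfin3 : (2 * δ) * (l + d) ≤ χ * (l + d) :=
    mul_le_mul_of_nonneg_right hδ (by linarith)
  linarith only [hfin1, hfin2, hfin3, hGsq, sq_nonneg χ]

/-!
STATEMENT 5 (uniform defect estimate): with `l = |o - o₀| ≥ l₀ > 0`, `σ` a geodesic in the
vertical plane `w₀ × ℝ` making angle `α ∈ [α₀, π/2]` with the horizontal, `t ∈ w₀` at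
distance `d ≥ 1` from `o₀` and `s ∈ σ` at arclength `d` from `o₀`:
`dist_{H²}(o,t) = arcosh(cosh l · cosh d)` and
`dist_{H²×ℝ}(o,s) = sqrt(arcosh(cosh l · cosh(d cos α))² + (d sin α)²)`, and the defect
`Δ = dist_{H²}(o,t) − dist_{H²×ℝ}(o,s)` is bounded below by some `δ₀ > 0` depending only
on `l₀` and `α₀`.
-/
set_option maxHeartbeats 2000000 in
theorem uniform_defect_estimate (l₀ α₀ : ℝ) (hl₀ : 0 < l₀) (hα₀ : 0 < α₀)
    (hα₀' : α₀ ≤ Real.pi / 2) :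
    ∃ δ₀ > 0, ∀ l α d : ℝ, l₀ ≤ l → α₀ ≤ α → α ≤ Real.pi / 2 → 1 ≤ d →
      δ₀ ≤ arcosh (Real.cosh l * Real.cosh d) -
        Real.sqrt ((arcosh (Real.cosh l * Real.cosh (d * Real.cos α))) ^ 2
          + (d * Real.sin α) ^ 2) := by
  have hπ : 0 < Real.pi := Real.pi_pos
  have hcosα₀ : Real.cos α₀ < 1 := by
    have h1 : Real.cos α₀ ≤ 1 := Real.cos_le_one α₀
    rcases eq_or_lt_of_le h1 with h | h
    · exfalso
      have := (Real.cos_eq_one_iff_of_lt_of_lt (x := α₀) (by linarith) (by linarith)).mp h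
      linarith
    · exact h
  set μ := 1 - Real.cos α₀ with hμdef
  have hμ : 0 < μ := by rw [hμdef]; linarith
  have hμ1 : μ ≤ 1 := by
    have := Real.cos_nonneg_of_mem_Icc (x := α₀) ⟨by linarith, hα₀'⟩
    rw [hμdef]; linarith
  set Λ₀ := Real.log (Real.cosh l₀) with hΛ₀def
  have hΛ₀ : 0 < Λ₀ := Real.log_pos (Real.one_lt_cosh.mpr hl₀.ne')
  set κ := min 1 Λ₀ / 2 with hκdef
  have hκ : 0 < κ := by
    rw [hκdef]; have := lt_min one_pos hΛ₀; positivity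
  have hκhalf : κ ≤ 1 / 2 := by
    rw [hκdef]; have := min_le_left 1 Λ₀; linarith
  set ε₁ := μ * min Λ₀ 1 / 8 with hε₁def
  have hε₁ : 0 < ε₁ := by
    rw [hε₁def]
    have := lt_min hΛ₀ one_pos
    positivity
  set T₁ := max 1 (Real.log (1 / ε₁) / 2) with hT₁def
  have hT₁1 : 1 ≤ T₁ := le_max_left _ _
  have hT₁pos : 0 < T₁ := by linarith
  have hexpT₁ : Real.exp (-(2 * T₁)) ≤ ε₁ := by
    have hT : Real.log (1 / ε₁) / 2 ≤ T₁ := le_max_right _ _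
    have h1 : Real.log (1 / ε₁) = -Real.log ε₁ := by rw [one_div, Real.log_inv]
    have h2 : -(2 * T₁) ≤ Real.log ε₁ := by rw [h1] at hT; linarith
    calc Real.exp (-(2 * T₁)) ≤ Real.exp (Real.log ε₁) := Real.exp_le_exp.mpr h2
      _ = ε₁ := Real.exp_log hε₁
  set d₁ := (2 * T₁ + 4) / κ with hd₁def
  have hd₁pos : 0 < d₁ := by rw [hd₁def]; positivity
  have hd₁1 : 1 ≤ d₁ := by
    rw [hd₁def, le_div_iff₀ hκ]; linarith
  set ν := Real.log (Real.cosh μ) with hνdef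
  have hν : 0 < ν := Real.log_pos (Real.one_lt_cosh.mpr hμ.ne')
  set l₂ := max l₀ ((d₁ ^ 2 + d₁) / ν) with hl₂def
  have hl₂pos : 0 < l₂ := lt_of_lt_of_le hl₀ (le_max_left _ _)
  set θ₀ := Real.sinh Λ₀ / (Real.cosh T₁ * Real.cosh (l₂ + T₁)) with hθ₀def
  have hθ₀ : 0 < θ₀ := by
    rw [hθ₀def]
    exact div_pos (Real.sinh_pos_iff.mpr hΛ₀) (by positivity)
  set Θ₀ := θ₀ * l₀ ^ 2 * μ ^ 2 / 6 with hΘ₀def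
  have hΘ₀ : 0 < Θ₀ := by rw [hΘ₀def]; positivity
  set E := Real.exp (l₂ + d₁) with hEdef
  have hE : 0 < E := Real.exp_pos _
  set χ := min 1 (Θ₀ / (3 * E)) with hχdef
  have hχ : 0 < χ := lt_min one_pos (by positivity)
  have hχ1 : χ ≤ 1 := min_le_left _ _
  set δ := min (min (μ * min Λ₀ κ / 4) (min Λ₀ 2 / 2)) (min (min ν 1 / 2) (χ / 2)) with hδdef
  have hminΛκ : 0 < min Λ₀ κ := lt_min hΛ₀ hκ
  have hminΛ2 : 0 < min Λ₀ 2 := lt_min hΛ₀ two_pos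
  have hminν1 : 0 < min ν 1 := lt_min hν one_pos
  have hδpos : 0 < δ := by
    rw [hδdef]
    apply lt_min (lt_min _ _) (lt_min _ _) <;> positivity
  have hδa : δ ≤ μ * min Λ₀ κ / 4 := by
    rw [hδdef]; exact le_trans (min_le_left _ _) (min_le_left _ _)
  have hδb : δ ≤ min Λ₀ 2 / 2 := by
    rw [hδdef]; exact le_trans (min_le_left _ _) (min_le_right _ _)
  have hδc : δ ≤ min ν 1 / 2 := by
    rw [hδdef]; exact le_trans (min_le_right _ _) (min_le_left _ _)
  have hδd : δ ≤ χ / 2 := by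
    rw [hδdef]; exact le_trans (min_le_right _ _) (min_le_right _ _)
  clear_value μ Λ₀ κ ε₁ T₁ d₁ ν l₂ θ₀ Θ₀ E χ δ
  refine ⟨δ, hδpos, ?_⟩
  intro l α d hl hα1 hα2 hd
  have hl0 : 0 < l := lt_of_lt_of_le hl₀ hl
  have hd0 : 0 < d := by linarith only [hd]
  -- cosine facts
  have hc0 : 0 ≤ Real.cos α := Real.cos_nonneg_of_mem_Icc ⟨by linarith, hα2⟩
  have hc1 : Real.cos α ≤ 1 := Real.cos_le_one α
  have hcc : Real.cos α ≤ Real.cos α₀ :=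
    Real.cos_le_cos_of_nonneg_of_le_pi hα₀.le (by linarith) hα1
  set c := Real.cos α with hcdef
  set b := d * c with hbdef
  clear_value c b
  have hb0 : 0 ≤ b := by rw [hbdef]; exact mul_nonneg hd0.le hc0
  have hbd : b ≤ d := by
    rw [hbdef]
    have := mul_le_mul_of_nonneg_left hc1 hd0.le
    linarith only [this]
  have hμc : μ ≤ 1 - c := by rw [hμdef]; linarith only [hcc]
  have he : μ * d ≤ d - b := by
    rw [hbdef]
    have := mul_le_mul_of_nonneg_left hμc hd0.le
    linarith only [this]
  have hμd : μ ≤ μ * d := by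
    have := mul_le_mul_of_nonneg_left hd hμ.le
    linarith only [this]
  -- Λ facts
  set Λ := Real.log (Real.cosh l) with hΛdef
  clear_value Λ
  have hΛΛ₀ : Λ₀ ≤ Λ := by
    rw [hΛdef, hΛ₀def]
    apply Real.log_le_log (Real.cosh_pos l₀)
    rw [Real.cosh_le_cosh, abs_of_nonneg hl₀.le, abs_of_nonneg hl0.le]
    exact hl
  have hΛ0 : 0 ≤ Λ := le_trans hΛ₀.le hΛΛ₀
  have hΛl : Λ ≤ l := by
    rw [hΛdef]
    calc Real.log (Real.cosh l) ≤ Real.log (Real.exp l) :=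
          Real.log_le_log (Real.cosh_pos l) (cosh_le_exp_of_nonneg hl0.le)
      _ = l := Real.log_exp l
  have hlog2 : Real.log 2 ≤ 1 := by
    have := Real.log_two_lt_d9
    linarith only [this]
  have hΛlog2 : l - Real.log 2 ≤ Λ := by
    have h1 : Real.exp l / 2 ≤ Real.cosh l := by
      rw [Real.cosh_eq]; linarith only [Real.exp_pos (-l)]
    have h2 : Real.log (Real.exp l / 2) ≤ Λ := by
      rw [hΛdef]
      exact Real.log_le_log (by positivity) h1
    rw [Real.log_div (Real.exp_ne_zero l) (by norm_num), Real.log_exp] at h2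
    exact h2
  have hΛl1 : l - 1 ≤ Λ := by linarith only [hΛlog2, hlog2, hl0]
  have hκl : κ * l ≤ Λ := by
    rcases le_or_gt l 2 with h | h
    · have h1 : κ * l ≤ κ * 2 := mul_le_mul_of_nonneg_left h hκ.le
      have h2 : κ * 2 ≤ Λ₀ := by
        rw [hκdef]; have := min_le_right 1 Λ₀; linarith only [this]
      linarith only [h1, h2, hΛΛ₀]
    · have h1 : κ * l ≤ (1 / 2) * l := mul_le_mul_of_nonneg_right hκhalf hl0.le
      linarith only [h1, hΛlog2, hlog2, h]
  -- A and B
  have h1A : (1:ℝ) ≤ Real.cosh l * Real.cosh d := by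
    have := mul_le_mul (Real.one_le_cosh l) (Real.one_le_cosh d) zero_le_one (Real.cosh_pos l).le
    linarith only [this]
  have h1B : (1:ℝ) ≤ Real.cosh l * Real.cosh b := by
    have := mul_le_mul (Real.one_le_cosh l) (Real.one_le_cosh b) zero_le_one (Real.cosh_pos l).le
    linarith only [this]
  set A := arcosh (Real.cosh l * Real.cosh d) with hAdef
  set B := arcosh (Real.cosh l * Real.cosh b) with hBdef
  have hcoshA : Real.cosh A = Real.cosh l * Real.cosh d := cosh_arcosh h1A
  have hcoshB : Real.cosh B = Real.cosh l * Real.cosh b := cosh_arcosh h1B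
  have hAarc : ∀ m : ℝ, 0 ≤ m → Real.cosh m ≤ Real.cosh l * Real.cosh d → m ≤ A :=
    fun m hm h => le_arcosh h1A hm h
  have hBarc : ∀ m : ℝ, 0 ≤ m → Real.cosh m ≤ Real.cosh l * Real.cosh b → m ≤ B :=
    fun m hm h => le_arcosh h1B hm h
  have hA_ub' : A ≤ l + d := arcosh_le h1A (by linarith only [hl0, hd0]) (cosh_mul_cosh_le hl0.le hd0.le)
  have hB_ub' : B ≤ l + b := arcosh_le h1B (by linarith only [hl0, hb0]) (cosh_mul_cosh_le hl0.le hb0)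
  clear_value A B
  have hA_ub : A ≤ l + d := hA_ub'
  have hA_d : d ≤ A := by
    apply hAarc d hd0.le
    have := mul_le_mul_of_nonneg_right (Real.one_le_cosh l) (Real.cosh_pos d).le
    linarith only [this]
  have hA_lb : d + Λ ≤ A := by
    apply hAarc _ (by linarith only [hd0, hΛ0])
    rw [hΛdef]
    exact cosh_add_log_le l d
  have hB_ub : B ≤ l + b := hB_ub'
  have hB_lb : b + Λ ≤ B := by
    apply hBarc _ (by linarith only [hb0, hΛ0])
    rw [hΛdef]
    exact cosh_add_log_le l b
  have hB_l : l ≤ B := by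
    apply hBarc l hl0.le
    have := mul_le_mul_of_nonneg_left (Real.one_le_cosh b) (Real.cosh_pos l).le
    linarith only [this]
  have hA0 : 0 < A := by linarith only [hA_d, hd0]
  have hB0 : 0 < B := by linarith only [hB_l, hl0]
  -- the key quadratic estimate
  have key : B ^ 2 + (d ^ 2 - b ^ 2) + 2 * δ * (l + d) ≤ A ^ 2 := by
    rcases le_or_gt T₁ b with hcase1 | hbT₁
    · -- Case 1 : b large
      set r := Real.log (1 + Real.exp (-(2 * b))) with hrdef
      have hexb : 0 < Real.exp (-(2 * b)) := Real.exp_pos _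
      have hr0 : 0 ≤ r := Real.log_nonneg (by linarith only [hexb])
      have hrbound : r ≤ ε₁ := by
        have h1 : r ≤ (1 + Real.exp (-(2 * b))) - 1 :=
          Real.log_le_sub_one_of_pos (by linarith only [hexb])
        have h2 : Real.exp (-(2 * b)) ≤ Real.exp (-(2 * T₁)) :=
          Real.exp_le_exp.mpr (by linarith only [hcase1])
        linarith only [h1, h2, hexpT₁]
      clear_value r
      have hr8 : 8 * r ≤ μ * min Λ₀ 1 := by
        rw [hε₁def] at hrbound; linarith only [hrbound]
      have hεμ : ε₁ ≤ μ / 8 := by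
        rw [hε₁def]
        have := mul_le_mul_of_nonneg_left (min_le_right Λ₀ 1) hμ.le
        linarith only [this]
      have hm0 : 0 ≤ (d - b) - r := by linarith only [hrbound, hεμ, hμ, hμd, he]
      have hABm : B + ((d - b) - r) ≤ A := by
        apply hAarc _ (by linarith only [hB0, hm0])
        have hs1 : Real.cosh (B + ((d - b) - r)) ≤ Real.cosh B * Real.exp ((d - b) - r) :=
          cosh_add_le B hm0
        have hexpm : Real.cosh b * Real.exp ((d - b) - r) ≤ Real.cosh d := by
          have e1 : Real.exp ((d - b) - r) = Real.exp (d - b) / (1 + Real.exp (-(2 * b))) := by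
            rw [Real.exp_sub, hrdef, Real.exp_log (by linarith only [hexb])]
          rw [e1, Real.cosh_eq, Real.cosh_eq]
          have hEb : Real.exp (-b) = (Real.exp b)⁻¹ := Real.exp_neg b
          have hE2b : Real.exp (-(2 * b)) = ((Real.exp b)⁻¹) ^ 2 := by
            rw [show -(2 * b) = -b + -b by ring, Real.exp_add, hEb]; ring
          have hEdb : Real.exp (d - b) = Real.exp d * (Real.exp b)⁻¹ := by
            rw [Real.exp_sub, div_eq_mul_inv]
          rw [hEb, hE2b, hEdb]
          have hx : 0 < Real.exp b := Real.exp_pos b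
          have keyeq : (Real.exp b + (Real.exp b)⁻¹) / 2 *
              (Real.exp d * (Real.exp b)⁻¹ / (1 + ((Real.exp b)⁻¹) ^ 2)) = Real.exp d / 2 := by
            field_simp
          rw [keyeq]
          linarith only [Real.exp_pos (-d)]
        have hs2 : Real.cosh B * Real.exp ((d - b) - r)
            = Real.cosh l * (Real.cosh b * Real.exp ((d - b) - r)) := by
          rw [hcoshB]; ring
        have hs3 : Real.cosh l * (Real.cosh b * Real.exp ((d - b) - r))
            ≤ Real.cosh l * Real.cosh d :=
          mul_le_mul_of_nonneg_left hexpm (Real.cosh_pos l).le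
        linarith only [hs1, hs2.le, hs2.ge, hs3]
      have hδ4 : 4 * δ ≤ μ * min Λ₀ κ := by linarith only [hδa]
      exact case1_est hμ hd hl0 hb0 hbd he hΛ0 hΛΛ₀ hΛ₀ hκ hκl hr0 hr8 hABm hA_lb hB_lb
        hδ4 hδpos.le
    rcases le_or_gt d₁ d with hcase2 | hdd₁
    · -- Case 2 : d large
      have hκd : 2 * T₁ + 4 ≤ κ * d := by
        rw [hd₁def, div_le_iff₀ hκ] at hcase2
        linarith only [hcase2]
      have hδ2 : 2 * δ ≤ min Λ₀ 2 := by linarith only [hδb]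
      exact case2_est hd hl0 hb0 hbT₁.le hΛ0 hΛΛ₀ hΛl1 hκd hκl hκ hA_lb hB_ub hB0.le
        hδ2 hδpos.le
    rcases le_or_gt l₂ l with hcase3 | hll₂
    · -- Case 3 : l large
      have hbμd : b + μ ≤ d := by linarith only [hμd, he]
      have hABν : B + ν ≤ A := by
        apply hAarc _ (by linarith only [hB0, hν])
        have h1 : Real.cosh (B + ν) ≤ Real.cosh B * Real.exp ν := cosh_add_le B hν.le
        have h2 : Real.exp ν = Real.cosh μ := by
          rw [hνdef]; exact Real.exp_log (Real.cosh_pos μ)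
        have h3 : Real.cosh b * Real.cosh μ ≤ Real.cosh (b + μ) := cosh_mul_cosh_le hb0 hμ.le
        have h4 : Real.cosh (b + μ) ≤ Real.cosh d := by
          rw [Real.cosh_le_cosh, abs_of_nonneg (by linarith only [hb0, hμ] : (0:ℝ) ≤ b + μ),
            abs_of_nonneg (by linarith only [hd0] : (0:ℝ) ≤ d)]
          exact hbμd
        have h5 : Real.cosh B * Real.exp ν = Real.cosh l * (Real.cosh b * Real.cosh μ) := by
          rw [hcoshB, h2]; ring
        have h6 : Real.cosh l * (Real.cosh b * Real.cosh μ) ≤ Real.cosh l * Real.cosh d :=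
          mul_le_mul_of_nonneg_left (le_trans h3 h4) (Real.cosh_pos l).le
        linarith only [h1, h5.le, h5.ge, h6]
      have hl₂' : (d₁ ^ 2 + d₁) / ν ≤ l₂ := by rw [hl₂def]; exact le_max_right _ _
      have hδ3 : 2 * δ ≤ min ν 1 := by linarith only [hδc]
      exact case3_est hν hd hdd₁.le hb0 hl₂' hcase3 hl0 hABν hB_l hδ3 hδpos.le
    · -- Case 4 : compact box
      have hχE : 3 * E * χ ≤ Θ₀ := by
        have h1 : χ ≤ Θ₀ / (3 * E) := by rw [hχdef]; exact min_le_right _ _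
        rw [le_div_iff₀ (by positivity)] at h1
        linarith only [h1]
      have hδ4 : 2 * δ ≤ χ := by linarith only [hδd]
      exact case4_est hl₀ hl hll₂.le hd hdd₁.le hb0 hbT₁.le hbd hμ he hμd hΛ0 hΛΛ₀ hΛ₀
        hB_lb hB_l hB_ub hcoshA hcoshB hAarc hBarc hθ₀def hΘ₀def hEdef hχ hχ1 hχE
        hδ4 hδpos.le
  -- reduction to the goal
  have hsin : (d * Real.sin α) ^ 2 = d ^ 2 - b ^ 2 := by
    have hpy := Real.sin_sq_add_cos_sq α
    rw [hbdef, hcdef]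
    linear_combination d ^ 2 * hpy
  have hδ1 : δ ≤ 1 := by
    have h2 : min Λ₀ 2 ≤ 2 := min_le_right _ _
    linarith only [hδb, h2]
  have hP : B ^ 2 + (d * Real.sin α) ^ 2 ≤ (A - δ) ^ 2 := by
    rw [hsin]
    have e1 : 2 * δ * A ≤ 2 * δ * (l + d) :=
      mul_le_mul_of_nonneg_left hA_ub (by linarith)
    have e2 : (A - δ) ^ 2 = A ^ 2 - 2 * δ * A + δ ^ 2 := by ring
    have e3 : B ^ 2 + (d ^ 2 - b ^ 2) ≤ A ^ 2 - 2 * δ * A := by linarith only [key, e1]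
    linarith only [e2, e3, sq_nonneg δ]
  have hsqrt : Real.sqrt (B ^ 2 + (d * Real.sin α) ^ 2) ≤ A - δ := by
    have hAδ : 0 ≤ A - δ := by linarith only [hA_d, hd, hδ1]
    calc Real.sqrt (B ^ 2 + (d * Real.sin α) ^ 2) ≤ Real.sqrt ((A - δ) ^ 2) :=
          Real.sqrt_le_sqrt hP
      _ = A - δ := Real.sqrt_sq hAδ
  linarith only [hsqrt, hsin]
end
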